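/- Let w be a string with unique terminator, and define the relation ≡_χ on positions of w as the equivalence closure of: for any two super-maximal right extensions yxc and zxc' (c,c' characters, x the longest common suffix of yx and zx, x nonempty), with w[i..i+|x|-1] the occurrence of x inside the leftmost occurrence of yxc and w[i'..i'+|x|-1] the occurrence of x inside the leftmost occurrence of zxc', we set i+k ≡_χ i'+k for all 0 ≤ k < |x|. Then for any repeating substring u of w (a substring with at least two occurrences) and any two occurrences u = w[i..i+|u|-1] = w[i'..i'+|u|-1], we have i+k ≡_χ i'+k for all 0 ≤ k < |u|. -/

import Mathlib

/-- `u` occurs in `w` starting at 1-indexed position `i`. -/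
def occursAt {α : Type*} (w u : List α) (i : ℕ) : Prop :=
  1 ≤ i ∧ i + u.length ≤ w.length + 1 ∧ (w.drop (i - 1)).take u.length = u

/-- `u` is a right extension in `w`: `u = x ++ [c]`, both `x++[c]` and `x++[c']`
occur in `w` for some `c' ≠ c`. -/
def RightExt {α : Type*} (w u : List α) : Prop :=
  ∃ (x : List α) (c c' : α), c ≠ c' ∧ u = x ++ [c] ∧
    (x ++ [c]) <:+: w ∧ (x ++ [c']) <:+: w

/-- super-maximal right extension: not a proper suffix of another right extension. -/
def SupMaxExt {α : Type*} (w u : List α) : Prop :=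
  RightExt w u ∧ ∀ v, RightExt w v → u <:+ v → u = v

def SRE {α : Type*} (w : List α) : Set (List α) := {u | SupMaxExt w u}

noncomputable def chi {α : Type*} (w : List α) : ℕ := (SRE w).ncard

/-- `w` ends with a character that occurs nowhere else. -/
def UniqueTerm {α : Type*} (w : List α) : Prop :=
  ∃ (v : List α) (d : α), w = v ++ [d] ∧ d ∉ v

/-- substring equation system -/
structure SES (α : Type*) where
  n : ℕ
  Eqs : Finset (ℕ × ℕ × ℕ)
  Ch : Finset (ℕ × α)

def SES.valid {α : Type*} (E : SES α) : Prop :=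
  (∀ e ∈ E.Eqs, 1 ≤ e.1 ∧ 1 ≤ e.2.1 ∧ 1 ≤ e.2.2 ∧
      e.1 + e.2.2 ≤ E.n + 1 ∧ e.2.1 + e.2.2 ≤ E.n + 1) ∧
  (∀ kc ∈ E.Ch, 1 ≤ kc.1 ∧ kc.1 ≤ E.n)

def SES.sat {α : Type*} (E : SES α) (w : List α) : Prop :=
  w.length = E.n ∧
  (∀ e ∈ E.Eqs, (w.drop (e.1 - 1)).take e.2.2 = (w.drop (e.2.1 - 1)).take e.2.2) ∧
  (∀ kc ∈ E.Ch, w[kc.1 - 1]? = some kc.2)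

def SES.represents {α : Type*} (E : SES α) (w : List α) : Prop :=
  E.sat w ∧ ∀ w' : List α, E.sat w' → w' = w

def SES.size {α : Type*} (E : SES α) : ℕ := E.Eqs.card + E.Ch.card

/-- minimum size of a valid SES representing `w` -/
noncomputable def sVal {α : Type*} (w : List α) : ℕ :=
  sInf {k | ∃ E : SES α, E.valid ∧ E.represents w ∧ E.size = k}

/-- bidirectional macro scheme machinery -/
def phraseLen {α : Type*} : α ⊕ (ℕ × ℕ) → ℕ
  | Sum.inl _ => 1
  | Sum.inr (_, ℓ) => ℓ

def startPos {α : Type*} (ph : List (α ⊕ (ℕ × ℕ))) (t : ℕ) : ℕ :=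
  1 + ((ph.take t).map phraseLen).sum

/-- the phrase list `ph` is a (content-correct) macro scheme for `w` -/
def BMSFor {α : Type*} (w : List α) (ph : List (α ⊕ (ℕ × ℕ))) : Prop :=
  (ph.map phraseLen).sum = w.length ∧
  ∀ t (h : t < ph.length),
    match ph.get ⟨t, h⟩ with
    | Sum.inl c => w[startPos ph t - 1]? = some c
    | Sum.inr (p, ℓ) => 1 ≤ ℓ ∧ 1 ≤ p ∧ p + ℓ ≤ w.length + 1 ∧
        (w.drop (startPos ph t - 1)).take ℓ = (w.drop (p - 1)).take ℓ

/-- the transition function τ (on 0-based offsets) -/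
def tauAux {α : Type*} : List (α ⊕ (ℕ × ℕ)) → ℕ → Option ℕ
  | [], _ => none
  | (Sum.inl _) :: rest, i => if i = 0 then none else tauAux rest (i - 1)
  | (Sum.inr (p, ℓ)) :: rest, i => if i < ℓ then some (p + i) else tauAux rest (i - ℓ)

/-- τ on 1-indexed positions -/
def tauStep {α : Type*} (ph : List (α ⊕ (ℕ × ℕ))) (i : ℕ) : Option ℕ :=
  tauAux ph (i - 1)

/-- validity: every position reaches ⊥ after finitely many steps -/
def BMSValid {α : Type*} (ph : List (α ⊕ (ℕ × ℕ))) (n : ℕ) : Prop :=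
  ∀ i, 1 ≤ i → i ≤ n →
    ∃ k, (fun o : Option ℕ => o.bind (tauStep ph))^[k] (some i) = none

noncomputable def bVal {α : Type*} (w : List α) : ℕ :=
  sInf {k | ∃ ph : List (α ⊕ (ℕ × ℕ)),
      BMSFor w ph ∧ BMSValid ph w.length ∧ ph.length = k}

/-- string attractor -/
def IsAttractor {α : Type*} (w : List α) (Γ : Finset ℕ) : Prop :=
  (∀ p ∈ Γ, 1 ≤ p ∧ p ≤ w.length) ∧
  ∀ u : List α, u ≠ [] → u <:+: w →
    ∃ i, occursAt w u i ∧ ∃ p ∈ Γ, i ≤ p ∧ p ≤ i + u.length - 1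

noncomputable def gammaVal {α : Type*} (w : List α) : ℕ :=
  sInf {k | ∃ Γ : Finset ℕ, IsAttractor w Γ ∧ Γ.card = k}

/-- Thue–Morse words over Bool (`false` = a, `true` = b) -/
def tm : ℕ → List Bool
  | 0 => [false]
  | n + 1 => (tm n).flatMap (fun b => [b, !b])

/-- leftmost occurrence -/
def leftmostOcc {α : Type*} (w v : List α) (i : ℕ) : Prop :=
  occursAt w v i ∧ ∀ i', occursAt w v i' → i ≤ i'

/-- generating pairs of the equivalence `≡_χ` -/
def GenPair {α : Type*} (w : List α) (j j' : ℕ) : Prop :=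
  ∃ (y z x : List α) (c c' : α) (i i' : ℕ),
    x ≠ [] ∧
    SupMaxExt w (y ++ x ++ [c]) ∧ SupMaxExt w (z ++ x ++ [c']) ∧
    (y = [] ∨ z = [] ∨ y.getLast? ≠ z.getLast?) ∧
    leftmostOcc w (y ++ x ++ [c]) i ∧ leftmostOcc w (z ++ x ++ [c']) i' ∧
    ∃ k < x.length, j = i + y.length + k ∧ j' = i' + z.length + k

def chiEquiv {α : Type*} (w : List α) : ℕ → ℕ → Prop := Relation.EqvGen (GenPair w)

section ChiHelpers
variable {α : Type*}

theorem occ_of_parts {w u s t : List α} (h : w = s ++ u ++ t) :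
    occursAt w u (s.length + 1) := by
  subst h
  refine ⟨Nat.le_add_left _ _, ?_, ?_⟩
  · simp [List.length_append]; omega
  · simp only [Nat.add_sub_cancel, List.append_assoc, List.drop_left]
    exact List.take_left

theorem occ_iff {w u : List α} {i : ℕ} :
    occursAt w u i ↔ ∃ s t, w = s ++ u ++ t ∧ s.length + 1 = i := by
  constructor
  · rintro ⟨h1, h2, h3⟩
    refine ⟨w.take (i-1), w.drop ((i-1) + u.length), ?_, ?_⟩
    · conv_lhs => rw [← List.take_append_drop (i-1) w]
      rw [List.append_assoc]
      congr 1
      rw [← List.drop_drop] at *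
      conv_lhs => rw [← List.take_append_drop u.length (w.drop (i-1))]
      rw [h3]
    · rw [List.length_take]; omega
  · rintro ⟨s, t, rfl, rfl⟩
    exact occ_of_parts rfl

theorem rightExt_infix {w u : List α} (h : RightExt w u) : u <:+: w := by
  obtain ⟨x, c, c', _, rfl, h1, _⟩ := h; exact h1

theorem infix_parts {u w : List α} (h : u <:+: w) : ∃ s t, w = s ++ u ++ t := by
  obtain ⟨s, t, h⟩ := h
  exact ⟨s, t, by rw [← h, List.append_assoc]⟩

theorem infix_of_parts {u w s t : List α} (h : w = s ++ u ++ t) : u <:+: w :=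
  ⟨s, t, by rw [h, List.append_assoc]⟩

theorem leftmost_exists {u w : List α} (h : u <:+: w) : ∃ i, leftmostOcc w u i := by
  classical
  obtain ⟨s, t, hp⟩ := infix_parts h
  have hocc' : ∃ i, occursAt w u i := ⟨s.length + 1, occ_of_parts hp⟩
  exact ⟨Nat.find hocc', Nat.find_spec hocc', fun i' hi' => Nat.find_min' hocc' hi'⟩

theorem supmax_exists {w u : List α} (h : RightExt w u) :
    ∃ r, SupMaxExt w r ∧ u <:+ r := by
  suffices H : ∀ m (u : List α), RightExt w u → w.length ≤ u.length + m →
      ∃ r, SupMaxExt w r ∧ u <:+ r by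
    have hle : u.length ≤ w.length := (rightExt_infix h).length_le
    exact H (w.length - u.length) u h (by omega)
  intro m
  induction m with
  | zero =>
    intro u hu hlen
    refine ⟨u, ⟨hu, fun v hv hsuf => ?_⟩, List.suffix_rfl⟩
    have h1 : v.length ≤ w.length := (rightExt_infix hv).length_le
    have h2 : u.length ≤ v.length := hsuf.length_le
    exact (List.IsSuffix.eq_of_length hsuf (by omega)).symm ▸ rfl
  | succ m ih =>
    intro u hu hlen
    by_cases hsm : ∀ v, RightExt w v → u <:+ v → u = v
    · exact ⟨u, ⟨hu, hsm⟩, List.suffix_rfl⟩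
    · push_neg at hsm
      obtain ⟨v, hv, hsuf, hne⟩ := hsm
      have h2 : u.length < v.length := by
        rcases Nat.lt_or_ge u.length v.length with h | h
        · exact h
        · exact absurd (List.IsSuffix.eq_of_length hsuf (le_antisymm hsuf.length_le h)) hne
      obtain ⟨r, hr, hsuf'⟩ := ih v hv (by omega)
      exact ⟨r, hr, hsuf.trans hsuf'⟩

theorem suffix_getLast? {u Y : List α} (h : u <:+ Y) (hu : u ≠ []) :
    Y.getLast? = u.getLast? := by
  obtain ⟨s, rfl⟩ := h
  exact List.getLast?_append_of_ne_nil s hu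

theorem lcs_aux : ∀ (n : ℕ) (Y Z : List α), Y.length ≤ n → ∃ x y z, Y = y ++ x ∧ Z = z ++ x ∧
    (y = [] ∨ z = [] ∨ y.getLast? ≠ z.getLast?) ∧
    ∀ u, u <:+ Y → u <:+ Z → u <:+ x := by
  classical
  intro n
  induction n with
  | zero =>
    intro Y Z hY
    have hY : Y = [] := List.length_eq_zero_iff.mp (Nat.le_zero.mp hY)
    exact ⟨[], Y, Z, by simp, by simp, Or.inl hY, fun u hu _ => by
      rw [hY] at hu; simpa [List.suffix_nil.mp hu] using List.nil_suffix⟩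
  | succ n ih =>
    intro Y Z hlen
    by_cases hY : Y = []
    · exact ⟨[], Y, Z, by simp, by simp, Or.inl hY, fun u hu _ => by
        rw [hY] at hu; simpa [List.suffix_nil.mp hu] using List.nil_suffix⟩
    by_cases hZ : Z = []
    · exact ⟨[], Y, Z, by simp, by simp, Or.inr (Or.inl hZ), fun u _ hu => by
        rw [hZ] at hu; simpa [List.suffix_nil.mp hu] using List.nil_suffix⟩
    by_cases hlast : Y.getLast? = Z.getLast?
    · obtain ⟨a, ha⟩ : ∃ a, Y.getLast? = some a := ⟨Y.getLast hY, List.getLast?_eq_getLast hY⟩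
      have hYd : Y.dropLast ++ [a] = Y := by
        rw [show a = Y.getLast hY from by
          rw [List.getLast?_eq_getLast hY] at ha; exact (Option.some_inj.mp ha).symm]
        exact List.dropLast_append_getLast hY
      have hb : Z.getLast? = some a := by rw [← hlast]; exact ha
      have hZd : Z.dropLast ++ [a] = Z := by
        rw [show a = Z.getLast hZ from by
          rw [List.getLast?_eq_getLast hZ] at hb; exact (Option.some_inj.mp hb).symm]
        exact List.dropLast_append_getLast hZ
      have hlen' : Y.dropLast.length ≤ n := by
        rw [List.length_dropLast]; have := List.length_pos_iff.mpr hY; omega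
      obtain ⟨x, y, z, h1, h2, h3, h4⟩ := ih Y.dropLast Z.dropLast hlen'
      refine ⟨x ++ [a], y, z, ?_, ?_, h3, ?_⟩
      · rw [← List.append_assoc, ← h1, hYd]
      · rw [← List.append_assoc, ← h2, hZd]
      · intro u huY huZ
        rcases eq_or_ne u [] with rfl | hu
        · exact List.nil_suffix
        · have hua : u.getLast? = some a := by
            rw [← suffix_getLast? huY hu]; exact ha
          have hub : u.dropLast ++ [a] = u := by
            rw [show a = u.getLast hu from by
              rw [List.getLast?_eq_getLast hu] at hua; exact (Option.some_inj.mp hua).symm]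
            exact List.dropLast_append_getLast hu
          have hud : u.dropLast <:+ Y.dropLast := by
            obtain ⟨s, hs⟩ := huY
            refine ⟨s, ?_⟩
            have : (s ++ u.dropLast) ++ [a] = Y.dropLast ++ [a] := by
              rw [List.append_assoc, hub, hs, hYd]
            exact List.append_left_injective _ |>.eq_iff.mp this
          have hud' : u.dropLast <:+ Z.dropLast := by
            obtain ⟨s, hs⟩ := huZ
            refine ⟨s, ?_⟩
            have : (s ++ u.dropLast) ++ [a] = Z.dropLast ++ [a] := by
              rw [List.append_assoc, hub, hs, hZd]
            exact List.append_left_injective _ |>.eq_iff.mp this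
          obtain ⟨s, hs⟩ := h4 u.dropLast hud hud'
          exact ⟨s, by rw [← hub, ← List.append_assoc, hs]⟩
    · refine ⟨[], Y, Z, by simp, by simp, Or.inr (Or.inr hlast), ?_⟩
      intro u huY huZ
      rcases eq_or_ne u [] with rfl | hu
      · exact List.nil_suffix
      · exact absurd ((suffix_getLast? huY hu).trans (suffix_getLast? huZ hu).symm) hlast

theorem term_next_char {w u : List α} (hterm : UniqueTerm w) (hu : u ≠ [])
    {a b : ℕ} (hab : a ≠ b) (ha : occursAt w u a) (hb : occursAt w u b)
    {s t : List α} (hparts : w = s ++ u ++ t) : t ≠ [] := by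
  rintro rfl
  obtain ⟨v, d, hw, hd⟩ := hterm
  obtain ⟨u', e, rfl⟩ : ∃ u' e, u = u' ++ [e] :=
    ⟨u.dropLast, u.getLast hu, (List.dropLast_append_getLast hu).symm⟩
  simp only [List.append_nil] at hparts
  have hsplit : v = s ++ u' ∧ [d] = [e] := by
    apply List.append_inj'
    · rw [← hw, hparts, List.append_assoc]
    · rfl
  obtain ⟨hv, hde⟩ := hsplit
  have hde : d = e := by injection hde
  subst hde
  have hex : ∃ p, occursAt w (u' ++ [d]) p ∧ p ≠ s.length + 1 := by
    rcases eq_or_ne a (s.length + 1) with rfl | h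
    · exact ⟨b, hb, fun hc => hab hc.symm⟩
    · exact ⟨a, ha, h⟩
  obtain ⟨p, hp, hpne⟩ := hex
  obtain ⟨sp, tp, hwp, hlp⟩ := occ_iff.mp hp
  have htp : tp ≠ [] := by
    rintro rfl
    apply hpne
    have : sp.length = s.length := by
      have h1 : w.length = sp.length + (u'.length + 1) := by
        rw [hwp]; simp [List.length_append]
      have h2 : w.length = s.length + (u'.length + 1) := by
        rw [hparts]; simp [List.length_append]
      omega
    omega
  obtain ⟨tp', f, rfl⟩ : ∃ tp' f, tp = tp' ++ [f] :=
    ⟨tp.dropLast, tp.getLast htp, (List.dropLast_append_getLast htp).symm⟩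
  have hsplit2 : v = sp ++ (u' ++ [d]) ++ tp' := by
    have : v ++ [d] = (sp ++ (u' ++ [d]) ++ tp') ++ [f] := by
      rw [← hw, hwp]; simp [List.append_assoc]
    exact (List.append_inj' this rfl).1
  apply hd
  rw [hsplit2]
  simp

theorem chi_main (w : List α) (hterm : UniqueTerm w) :
    ∀ (m : ℕ) (u : List α), u ≠ [] → w.length ≤ u.length + m →
    ∀ i i', occursAt w u i → occursAt w u i' →
    ∀ k < u.length, chiEquiv w (i + k) (i' + k) := by
  intro m
  induction m with
  | zero =>
    intro u hu hlen i i' hi hi' k hk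
    have h1 := hi.1; have h2 := hi.2.1
    have h1' := hi'.1; have h2' := hi'.2.1
    have : i = 1 ∧ i' = 1 := by omega
    obtain ⟨rfl, rfl⟩ := this
    exact Relation.EqvGen.refl _
  | succ m ih =>
    intro u hu hlen i i' hi hi'
    rcases eq_or_ne i i' with rfl | hne
    · intro k _; exact Relation.EqvGen.refl _
    obtain ⟨s, t, hw, hsl⟩ := occ_iff.mp hi
    obtain ⟨s', t', hw', hsl'⟩ := occ_iff.mp hi'
    have ht : t ≠ [] := term_next_char hterm hu hne hi hi' hw
    have ht' : t' ≠ [] := term_next_char hterm hu hne hi hi' hw'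
    obtain ⟨c, t, rfl⟩ : ∃ c t₂, t = c :: t₂ := ⟨t.head ht, t.tail, (List.cons_head_tail ht).symm⟩
    obtain ⟨c', t', rfl⟩ : ∃ c t₂, t' = c :: t₂ :=
      ⟨t'.head ht', t'.tail, (List.cons_head_tail ht').symm⟩
    have hwc : w = s ++ (u ++ [c]) ++ t := by rw [hw]; simp
    have hwc' : w = s' ++ (u ++ [c']) ++ t' := by rw [hw']; simp
    have hocc_c : occursAt w (u ++ [c]) i := hsl ▸ occ_of_parts hwc
    have hocc_c' : occursAt w (u ++ [c']) i' := hsl' ▸ occ_of_parts hwc'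
    have hlen1 : w.length ≤ (u ++ [c]).length + m := by simp; omega
    have hlen1' : w.length ≤ (u ++ [c']).length + m := by simp; omega
    rcases eq_or_ne c c' with rfl | hcc
    · intro k hk
      exact ih (u ++ [c]) (by simp) hlen1 i i' hocc_c hocc_c' k (by simp; omega)
    · have hinf_c : (u ++ [c]) <:+: w := infix_of_parts hwc
      have hinf_c' : (u ++ [c']) <:+: w := infix_of_parts hwc'
      have hre : RightExt w (u ++ [c]) := ⟨u, c, c', hcc, rfl, hinf_c, hinf_c'⟩
      have hre' : RightExt w (u ++ [c']) := ⟨u, c', c, hcc.symm, rfl, hinf_c', hinf_c⟩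
      obtain ⟨r, hrsm, y, rfl⟩ := supmax_exists hre
      obtain ⟨r', hrsm', y', rfl⟩ := supmax_exists hre'
      obtain ⟨l, hl⟩ := leftmost_exists (rightExt_infix hrsm.1)
      obtain ⟨l', hl'⟩ := leftmost_exists (rightExt_infix hrsm'.1)
      -- occurrence of u ++ [c] inside the leftmost occurrence of r
      obtain ⟨sl, tl, hwl, hsll⟩ := occ_iff.mp hl.1
      have hwl2 : w = (sl ++ y) ++ (u ++ [c]) ++ tl := by rw [hwl]; simp
      have hoccl : occursAt w (u ++ [c]) (l + y.length) := by
        have := occ_of_parts hwl2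
        rwa [show (sl ++ y).length + 1 = l + y.length by simp [List.length_append]; omega] at this
      obtain ⟨sl', tl', hwl', hsll'⟩ := occ_iff.mp hl'.1
      have hwl2' : w = (sl' ++ y') ++ (u ++ [c']) ++ tl' := by rw [hwl']; simp
      have hoccl' : occursAt w (u ++ [c']) (l' + y'.length) := by
        have := occ_of_parts hwl2'
        rwa [show (sl' ++ y').length + 1 = l' + y'.length by simp [List.length_append]; omega] at this
      have step1 := ih (u ++ [c]) (by simp) hlen1 i (l + y.length) hocc_c hoccl
      have step1' := ih (u ++ [c']) (by simp) hlen1' i' (l' + y'.length) hocc_c' hoccl'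
      -- bridge via GenPair
      obtain ⟨x, a, b, hYa, hYb, hcond, hcs⟩ := lcs_aux (y ++ u).length (y ++ u) (y' ++ u) le_rfl
      obtain ⟨t0, rfl⟩ := hcs u ⟨y, rfl⟩ ⟨y', rfl⟩
      have hya : y = a ++ t0 := by
        have : y ++ u = (a ++ t0) ++ u := by rw [hYa, List.append_assoc]
        exact List.append_left_injective _ |>.eq_iff.mp this
      have hyb : y' = b ++ t0 := by
        have : y' ++ u = (b ++ t0) ++ u := by rw [hYb, List.append_assoc]
        exact List.append_left_injective _ |>.eq_iff.mp this
      have e1 : a ++ (t0 ++ u) ++ [c] = y ++ (u ++ [c]) := by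
        rw [hya]; simp
      have e1' : b ++ (t0 ++ u) ++ [c'] = y' ++ (u ++ [c']) := by
        rw [hyb]; simp
      intro k hk
      have hgen : GenPair w (l + y.length + k) (l' + y'.length + k) := by
        refine ⟨a, b, t0 ++ u, c, c', l, l', by simp [hu], e1 ▸ hrsm, e1' ▸ hrsm',
          hcond, e1 ▸ hl, e1' ▸ hl', t0.length + k, ?_, ?_, ?_⟩
        · simp; omega
        · have : y.length = a.length + t0.length := by rw [hya]; simp
          omega
        · have : y'.length = b.length + t0.length := by rw [hyb]; simp
          omega
      refine Relation.EqvGen.trans _ _ _ (step1 k (by simp; omega)) ?_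
      refine Relation.EqvGen.trans _ _ _ (Relation.EqvGen.rel _ _ hgen) ?_
      exact Relation.EqvGen.symm _ _ (step1' k (by simp; omega))

end ChiHelpers

theorem stmt9 {α : Type*} (w u : List α) (hterm : UniqueTerm w) (hu : u ≠ [])
    (hrep : ∃ a b, a ≠ b ∧ occursAt w u a ∧ occursAt w u b)
    (i i' : ℕ) (h1 : occursAt w u i) (h2 : occursAt w u i') :
    ∀ k < u.length, chiEquiv w (i + k) (i' + k) := by
  have hle : w.length ≤ u.length + w.length := by omega
  exact chi_main w hterm w.length u hu hle i i' h1 h2
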